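/- With Z symmetric positive definite, Γ and Λ complementary selection matrices as above, and W = Γᵀ(ΓZΓᵀ)⁻¹Γ, the identity (Λᵀ − WZΛᵀ)(Λ(Z − ZWZ)Λᵀ)⁻¹ = Z⁻¹Λᵀ holds. -/

import Mathlib

open Matrix

lemma posdef_conj {p m : ℕ} (Γ : Matrix (Fin p) (Fin m) ℝ)
    (hΓΓ : Γ * Γᵀ = 1) (Z : Matrix (Fin m) (Fin m) ℝ) (hZ : Z.PosDef) :
    (Γ * Z * Γᵀ).PosDef := by
  refine posDef_iff_dotProduct_mulVec.mpr ⟨?_, ?_⟩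
  · have h := isHermitian_mul_mul_conjTranspose Γ hZ.isHermitian
    simpa using h
  · intro x hx
    have hx' : Γᵀ *ᵥ x ≠ 0 := by
      intro h
      apply hx
      have : Γ *ᵥ (Γᵀ *ᵥ x) = Γ *ᵥ 0 := by rw [h]
      rwa [mulVec_mulVec, hΓΓ, one_mulVec, mulVec_zero] at this
    have h2 := hZ.dotProduct_mulVec_pos hx'
    convert h2 using 1
    simp only [star_trivial, ← mulVec_mulVec, dotProduct_mulVec, mulVec_transpose]

theorem selection_inverse_identity
    (m p q : ℕ) (hm : 0 < m)
    (Γ : Matrix (Fin p) (Fin m) ℝ) (Λ : Matrix (Fin q) (Fin m) ℝ)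
    (hΓΓ : Γ * Γᵀ = 1) (hΛΛ : Λ * Λᵀ = 1)
    (hcompl : Γᵀ * Γ + Λᵀ * Λ = 1) (hΛΓ : Λ * Γᵀ = 0)
    (Z : Matrix (Fin m) (Fin m) ℝ) (hZ : Z.PosDef)
    (W : Matrix (Fin m) (Fin m) ℝ) (hW : W = Γᵀ * (Γ * Z * Γᵀ)⁻¹ * Γ) :
    (Λᵀ - W * Z * Λᵀ) * (Λ * (Z - Z * W * Z) * Λᵀ)⁻¹ = Z⁻¹ * Λᵀ := by
  have hA : (Γ * Z * Γᵀ).PosDef := posdef_conj Γ hΓΓ Z hZ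
  have hAdet : IsUnit (Γ * Z * Γᵀ).det := hA.det_pos.ne'.isUnit
  have hZdet : IsUnit Z.det := hZ.det_pos.ne'.isUnit
  have hAinv : (Γ * Z * Γᵀ)⁻¹ * (Γ * Z * Γᵀ) = 1 := nonsing_inv_mul _ hAdet
  have hAinv' : (Γ * Z * Γᵀ) * (Γ * Z * Γᵀ)⁻¹ = 1 := mul_nonsing_inv _ hAdet
  have hZinv : Z⁻¹ * Z = 1 := nonsing_inv_mul _ hZdet
  have hZinv' : Z * Z⁻¹ = 1 := mul_nonsing_inv _ hZdet
  have hΓΛ : Γ * Λᵀ = 0 := by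
    have := congrArg transpose hΛΓ
    simpa [transpose_mul] using this
  have key1 : W * Z * Γᵀ = Γᵀ := by
    rw [hW, Matrix.mul_assoc, Matrix.mul_assoc, Matrix.mul_assoc,
      ← Matrix.mul_assoc Γ Z Γᵀ, hAinv, Matrix.mul_one]
  have key2 : Γ * (Z * W) = Γ := by
    rw [hW]
    simp only [← Matrix.mul_assoc]
    rw [hAinv', Matrix.one_mul]
  have hWΛ : W * Λᵀ = 0 := by
    rw [hW, Matrix.mul_assoc, hΓΛ, Matrix.mul_zero]
  have hcomplΛ : Λᵀ * Λ = 1 - Γᵀ * Γ := by rw [← hcompl]; abel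
  have hZWZΓ : Z * W * Z * Γᵀ = Z * Γᵀ := by
    rw [Matrix.mul_assoc, Matrix.mul_assoc, ← Matrix.mul_assoc W Z Γᵀ, key1]
  have hSΓ : (Z - Z * W * Z) * Γᵀ = 0 := by
    rw [Matrix.sub_mul, hZWZΓ, sub_self]
  have hΓS : Γ * (Z - Z * W * Z) = 0 := by
    rw [Matrix.mul_sub]
    rw [show Γ * (Z * W * Z) = Γ * Z by rw [← Matrix.mul_assoc, key2], sub_self]
  set S := Z - Z * W * Z with hS
  set M := Λ * S * Λᵀ with hM
  set N := Λ * Z⁻¹ * Λᵀ with hN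
  have hSZ : S * Z⁻¹ = 1 - Z * W := by
    rw [hS, Matrix.sub_mul, hZinv', Matrix.mul_assoc (Z * W) Z Z⁻¹, hZinv', Matrix.mul_one]
  have hSΛ : S * (Z⁻¹ * Λᵀ) = Λᵀ := by
    rw [← Matrix.mul_assoc, hSZ, Matrix.sub_mul, Matrix.one_mul,
      Matrix.mul_assoc, hWΛ, Matrix.mul_zero, sub_zero]
  have hMN : M * N = 1 := by
    have h1 : M * N = Λ * (S * (Λᵀ * Λ) * (Z⁻¹ * Λᵀ)) := by
      rw [hM, hN]; simp only [Matrix.mul_assoc]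
    rw [h1, hcomplΛ, Matrix.mul_sub, Matrix.mul_one, Matrix.sub_mul,
      show S * (Γᵀ * Γ) = 0 by rw [← Matrix.mul_assoc, hSΓ, Matrix.zero_mul],
      Matrix.zero_mul, sub_zero, hSΛ, hΛΛ]
  have hMinv : M⁻¹ = N := inv_eq_right_inv hMN
  have hMM : M * M⁻¹ = 1 := by rw [hMinv]; exact hMN
  have hZS : Z⁻¹ * S = 1 - W * Z := by
    rw [hS, Matrix.mul_sub, hZinv,
      show Z⁻¹ * (Z * W * Z) = W * Z by
        simp only [← Matrix.mul_assoc]; rw [hZinv, Matrix.one_mul]]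
  have key3 : Z⁻¹ * Λᵀ * M = Λᵀ - W * Z * Λᵀ := by
    have h1 : Z⁻¹ * Λᵀ * M = Z⁻¹ * ((Λᵀ * Λ) * (S * Λᵀ)) := by
      rw [hM]; simp only [Matrix.mul_assoc]
    rw [h1, hcomplΛ, Matrix.sub_mul, Matrix.one_mul,
      show Γᵀ * Γ * (S * Λᵀ) = 0 by
        rw [Matrix.mul_assoc, ← Matrix.mul_assoc Γ S Λᵀ, hΓS, Matrix.zero_mul, Matrix.mul_zero],
      sub_zero, ← Matrix.mul_assoc, hZS, Matrix.sub_mul, Matrix.one_mul]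
  calc (Λᵀ - W * Z * Λᵀ) * M⁻¹ = Z⁻¹ * Λᵀ * (M * M⁻¹) := by
        rw [← key3, Matrix.mul_assoc]
    _ = Z⁻¹ * Λᵀ := by rw [hMM, Matrix.mul_one]
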